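/- Consider a finite family of matrices A_i ∈ ℝ^{d×d}, i ∈ P = {1,…,N}, and a switching signal σ. If for the given σ the switched linear system ẋ(t) = A_{σ(t)} x(t) is uniformly globally asymptotically convergent (i.e., for all r, ε > 0 there exists T(r,ε) > 0 such that every solution with ‖x(0)‖ < r satisfies ‖x(t)‖ < ε for all t > T(r,ε)), then the switched system is also Lyapunov stable for σ (i.e., for all ε > 0 there exists δ > 0 such that ‖x(0)‖ < δ implies ‖x(t)‖ < ε for all t ≥ 0); consequently it is globally asymptotically stable for σ. -/

import Mathlib

open scoped RealInnerProductSpace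

/-- `x` is a solution on `[0,∞)` of the switched linear system generated by the
family `A` and the switching signal with switching instants `τ` and index sequence `s`:
it is continuous on `[0,∞)` and satisfies `x'(t) = A_{s n} x(t)` on each `[τ n, τ (n+1))`. -/
def IsSwitchedSolution {d N : ℕ} (A : Fin N → Matrix (Fin d) (Fin d) ℝ)
    (τ : ℕ → ℝ) (s : ℕ → Fin N) (x : ℝ → EuclideanSpace ℝ (Fin d)) : Prop :=
  ContinuousOn x (Set.Ici 0) ∧
  ∀ n : ℕ, ∀ t ∈ Set.Ico (τ n) (τ (n + 1)),
    HasDerivWithinAt x (Matrix.toEuclideanLin (A (s n)) (x t)) (Set.Ico (τ n) (τ (n + 1))) t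

/-- If the switched linear system is uniformly globally asymptotically convergent for the
switching signal `(τ, s)`, then it is also Lyapunov stable for that signal; consequently it
is globally asymptotically stable (Lyapunov stability together with uniform global
asymptotic convergence). -/
theorem stmt0 {d N : ℕ} (A : Fin N → Matrix (Fin d) (Fin d) ℝ)
    (τ : ℕ → ℝ) (s : ℕ → Fin N)
    (hτ0 : τ 0 = 0) (hτmono : StrictMono τ)
    (hτtop : Filter.Tendsto τ Filter.atTop Filter.atTop)
    (hs : ∀ n, s (n + 1) ≠ s n)
    (hconv : ∀ r > (0 : ℝ), ∀ ε > (0 : ℝ), ∃ T > (0 : ℝ),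
      ∀ x : ℝ → EuclideanSpace ℝ (Fin d), IsSwitchedSolution A τ s x →
        ‖x 0‖ < r → ∀ t > T, ‖x t‖ < ε) :
    (∀ ε > (0 : ℝ), ∃ δ > (0 : ℝ),
      ∀ x : ℝ → EuclideanSpace ℝ (Fin d), IsSwitchedSolution A τ s x →
        ‖x 0‖ < δ → ∀ t ≥ (0 : ℝ), ‖x t‖ < ε) ∧
    (∀ r > (0 : ℝ), ∀ ε > (0 : ℝ), ∃ T > (0 : ℝ),
      ∀ x : ℝ → EuclideanSpace ℝ (Fin d), IsSwitchedSolution A τ s x →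
        ‖x 0‖ < r → ∀ t > T, ‖x t‖ < ε) := by
  refine ⟨?_, hconv⟩
  intro ε hε
  obtain ⟨T, hT, hTspec⟩ := hconv 1 one_pos ε hε
  -- operator norm bound
  set L : Fin N → EuclideanSpace ℝ (Fin d) →L[ℝ] EuclideanSpace ℝ (Fin d) :=
    fun i => LinearMap.toContinuousLinearMap (Matrix.toEuclideanLin (A i)) with hL
  set M : ℝ := 1 + ∑ i, ‖L i‖ with hM
  have hM1 : (1 : ℝ) ≤ M := by
    have : 0 ≤ ∑ i, ‖L i‖ := Finset.sum_nonneg fun i _ => norm_nonneg _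
    rw [hM]; linarith
  have hM0 : (0 : ℝ) < M := lt_of_lt_of_le one_pos hM1
  have hLM : ∀ i, ‖L i‖ ≤ M := by
    intro i
    have := Finset.single_le_sum (f := fun i => ‖L i‖)
      (fun j _ => norm_nonneg (L j)) (Finset.mem_univ i)
    linarith
  have cover : ∀ t : ℝ, 0 ≤ t → ∃ n, t ∈ Set.Ico (τ n) (τ (n + 1)) := by
    intro t ht
    have hex : ∃ m, t < τ m := by
      obtain ⟨m, hm⟩ := (hτtop.eventually (Filter.eventually_gt_atTop t)).exists
      exact ⟨m, hm⟩
    classical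
    have hmt : t < τ (Nat.find hex) := Nat.find_spec hex
    have hm0 : Nat.find hex ≠ 0 := by
      intro h
      rw [h, hτ0] at hmt
      exact absurd hmt (not_lt.2 ht)
    obtain ⟨n, hn⟩ := Nat.exists_eq_succ_of_ne_zero hm0
    rw [hn] at hmt
    have hnlt : ¬ t < τ n := Nat.find_min hex (by omega)
    exact ⟨n, not_lt.1 hnlt, hmt⟩
  classical
  refine ⟨min 1 (ε / Real.exp (M * T)), by positivity, ?_⟩
  rintro x ⟨hxc, hxd⟩ hx0 t ht
  -- Grönwall bound on [0, T]
  have gron : ∀ u ∈ Set.Icc (0 : ℝ) T, ‖x u‖ ≤ ‖x 0‖ * Real.exp (M * u) := by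
    set f' : ℝ → EuclideanSpace ℝ (Fin d) := fun u =>
      if h : 0 ≤ u then Matrix.toEuclideanLin (A (s (cover u h).choose)) (x u) else 0 with hf'
    have key := norm_le_gronwallBound_of_norm_deriv_right_le (f := x) (f' := f')
      (δ := ‖x 0‖) (K := M) (ε := 0) (a := 0) (b := T)
      (hxc.mono (Set.Icc_subset_Ici_self)) ?_ le_rfl ?_
    · intro u hu
      have := key u hu
      rwa [gronwallBound_ε0, sub_zero] at this
    · intro u hu
      have hu0 : (0 : ℝ) ≤ u := hu.1
      have hspec := (cover u hu0).choose_spec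
      have hd := hxd (cover u hu0).choose u hspec
      have hmem : Set.Ico (τ (cover u hu0).choose) (τ ((cover u hu0).choose + 1)) ∈
          nhdsWithin u (Set.Ici u) := Ico_mem_nhdsGE_of_mem hspec
      have : HasDerivWithinAt x
          (Matrix.toEuclideanLin (A (s (cover u hu0).choose)) (x u)) (Set.Ici u) u :=
        hd.mono_of_mem_nhdsWithin hmem
      simpa [hf', hu0] using this
    · intro u hu
      have hu0 : (0 : ℝ) ≤ u := hu.1
      have : f' u = L (s (cover u hu0).choose) (x u) := by simp [hf', hu0, hL]
      rw [this, add_zero]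
      calc ‖L (s (cover u hu0).choose) (x u)‖
          ≤ ‖L (s (cover u hu0).choose)‖ * ‖x u‖ := ContinuousLinearMap.le_opNorm _ _
        _ ≤ M * ‖x u‖ := by
            exact mul_le_mul_of_nonneg_right (hLM _) (norm_nonneg _)
  rcases le_or_gt t T with htT | htT
  · have h1 := gron t ⟨ht, htT⟩
    have h2 : ‖x 0‖ * Real.exp (M * t) < (ε / Real.exp (M * T)) * Real.exp (M * T) := by
      have hδ : ‖x 0‖ < ε / Real.exp (M * T) := lt_of_lt_of_le hx0 (min_le_right _ _)
      have hexp : Real.exp (M * t) ≤ Real.exp (M * T) :=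
        Real.exp_le_exp.2 (mul_le_mul_of_nonneg_left htT (le_of_lt hM0))
      calc ‖x 0‖ * Real.exp (M * t) ≤ ‖x 0‖ * Real.exp (M * T) :=
            mul_le_mul_of_nonneg_left hexp (norm_nonneg _)
        _ < (ε / Real.exp (M * T)) * Real.exp (M * T) :=
            mul_lt_mul_of_pos_right hδ (Real.exp_pos _)
    rw [div_mul_cancel₀ ε (Real.exp_pos _).ne'] at h2
    exact lt_of_le_of_lt h1 h2
  · exact hTspec x ⟨hxc, hxd⟩ (lt_of_lt_of_le hx0 (min_le_left _ _)) t htT
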